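/- arXiv:2406.12097 — 2 statements merged into one kernel-verified Lean document; each statement's English description precedes it below -/
import Mathlib

section
/- There exist absolute constants k₀ > 0 and K > 1 such that the following holds. Fix N ≥ 2, an N-ary tree V, and radially decaying weights with parameter ε ≤ k₀/N. Then for any distinct leaves v,w ∈ ∂V, K^{−1}·W_{lca(v,w)}/N ≤ |Ψ(w) − Ψ(v)| ≤ K·W_{lca(v,w)}. -/
open MeasureTheory Set Metric
open scoped Classical

noncomputable section

abbrev Pt : Type := EuclideanSpace ℝ (Fin 2)

/-- The point `(a, b)` of the Euclidean plane. -/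
def pt (a b : ℝ) : Pt := WithLp.toLp 2 ![a, b]

/-- `V` is an `N`-ary tree: a finite prefix-closed set of strings over the alphabet
`{0, …, N−1}` containing the empty string (the root), in which every non-leaf node
has at least `2` (and, automatically, at most `N`) children. -/
def IsNaryTree (N : ℕ) (V : Finset (List ℕ)) : Prop :=
  [] ∈ V ∧
  (∀ v ∈ V, ∀ u : List ℕ, u <+: v → u ∈ V) ∧
  (∀ v ∈ V, ∀ i ∈ v, i < N) ∧
  (∀ v ∈ V, (∃ a : ℕ, v ++ [a] ∈ V) →
    2 ≤ ((Finset.range N).filter (fun a => v ++ [a] ∈ V)).card)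

/-- `v` is a leaf of `V`. -/
def IsLeaf (V : Finset (List ℕ)) (v : List ℕ) : Prop :=
  v ∈ V ∧ ∀ a : ℕ, v ++ [a] ∉ V

/-- The tree has depth at least one, i.e. the root is not a leaf. -/
def DepthAtLeastOne (V : Finset (List ℕ)) : Prop := ∃ a : ℕ, [a] ∈ V

/-- Radially decaying weights with parameter `ε` (with the convention `W ∅ = 1`). -/
def RadiallyDecaying (V : Finset (List ℕ)) (W : List ℕ → ℝ) (ε : ℝ) : Prop :=
  W [] = 1 ∧ (∀ v ∈ V, 0 < W v) ∧ ∀ v ∈ V, v ≠ [] → W v ≤ ε * W v.dropLast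

/-- The map `Ψ(v) = ∑_{i=1}^{d(v)} W(π_{i−1}(v))·v_i/(N−1)`. -/
def Psi (N : ℕ) (W : List ℕ → ℝ) (v : List ℕ) : ℝ :=
  ∑ i ∈ Finset.range v.length, W (v.take i) * (v.getD i 0 : ℝ) / ((N : ℝ) - 1)

/-- `Δ = min_{v ∈ ∂V} W_v`. -/
def Delta (V : Finset (List ℕ)) (W : List ℕ → ℝ) : ℝ :=
  sInf {w : ℝ | ∃ v, IsLeaf V v ∧ w = W v}

def E1set (Δ : ℝ) : Set Pt :=
  {x | (∃ n : ℤ, x 0 = (n : ℝ) * Δ) ∧ x 0 ∈ Ico (0 : ℝ) 2 ∧ x 1 = 0}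

def E2set (N : ℕ) (V : Finset (List ℕ)) (W : List ℕ → ℝ) : Set Pt :=
  {x | ∃ v, IsLeaf V v ∧ x = pt (Psi N W v) (W v)}

def Eset (N : ℕ) (V : Finset (List ℕ)) (W : List ℕ → ℝ) : Set Pt :=
  E1set (Delta V W) ∪ E2set N V W

/-- Bundle of standing hypotheses: `N ≥ 2`, `V` an `N`-ary tree, `0 < ε ≤ k₀/N`,
and radially decaying weights with parameter `ε`. -/
def TreeHyp (k₀ : ℝ) (N : ℕ) (V : Finset (List ℕ)) (W : List ℕ → ℝ) (ε : ℝ) : Prop :=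
  2 ≤ N ∧ IsNaryTree N V ∧ 0 < ε ∧ ε ≤ k₀ / N ∧ RadiallyDecaying V W ε

/-- Distance between two subsets of the plane. -/
def setDist (s t : Set Pt) : ℝ := sInf {d : ℝ | ∃ x ∈ s, ∃ y ∈ t, d = dist x y}

/-- A dyadic square arising from `Q⁰ = [−3,5)²` by `k` repeated bisections. -/
structure DSquare where
  k : ℕ
  i : ℕ
  j : ℕ
  hi : i < 2 ^ k
  hj : j < 2 ^ k

namespace DSquare

def side (Q : DSquare) : ℝ := 8 / 2 ^ Q.k

def x0 (Q : DSquare) : ℝ := -3 + Q.i * Q.side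

def y0 (Q : DSquare) : ℝ := -3 + Q.j * Q.side

/-- The (half-open) square itself, as a subset of the plane. -/
def set (Q : DSquare) : Set Pt :=
  {x | x 0 ∈ Ico Q.x0 (Q.x0 + Q.side) ∧ x 1 ∈ Ico Q.y0 (Q.y0 + Q.side)}

/-- The concentric dilate `λQ`. -/
def dil (Q : DSquare) (lam : ℝ) : Set Pt :=
  {x | |x 0 - (Q.x0 + Q.side / 2)| ≤ lam * Q.side / 2 ∧
       |x 1 - (Q.y0 + Q.side / 2)| ≤ lam * Q.side / 2}

/-- The dyadic ancestor of `Q` at generation `k' ≤ Q.k`. -/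
def anc (Q : DSquare) (k' : ℕ) (h : k' ≤ Q.k) : DSquare :=
  ⟨k', Q.i / 2 ^ (Q.k - k'), Q.j / 2 ^ (Q.k - k'), by
      have h2 : 0 < 2 ^ (Q.k - k') := pow_pos (by norm_num) _
      rw [Nat.div_lt_iff_lt_mul h2, ← pow_add, Nat.add_sub_cancel' h]
      exact Q.hi, by
      have h2 : 0 < 2 ^ (Q.k - k') := pow_pos (by norm_num) _
      rw [Nat.div_lt_iff_lt_mul h2, ← pow_add, Nat.add_sub_cancel' h]
      exact Q.hj⟩

end DSquare

def Q0set : Set Pt := {x | x 0 ∈ Ico (-3 : ℝ) 5 ∧ x 1 ∈ Ico (-3 : ℝ) 5}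

/-- `Q` belongs to the Whitney decomposition `𝒲` of `Q⁰` relative to `E`:
`3Q ∩ E` has at most one point, while `3Q'' ∩ E` has at least two points for every
proper dyadic ancestor `Q''` of `Q`. -/
def InWhitney (E : Set Pt) (Q : DSquare) : Prop :=
  (Q.dil 3 ∩ E).Subsingleton ∧
  ∀ k' : ℕ, ∀ h : k' < Q.k, ¬ ((Q.anc k' h.le).dil 3 ∩ E).Subsingleton

/-- `Q ↔ Q'`, i.e. `1.1Q ∩ 1.1Q' ≠ ∅`. -/
def Touch (Q Q' : DSquare) : Prop := (Q.dil 1.1 ∩ Q'.dil 1.1).Nonempty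

/-- `‖F‖_{L^{2,p}(Ω)}^p = ∫_Ω |∇²F|^p`. -/
def sobEnergy (p : ℝ) (Ω : Set Pt) (F : Pt → ℝ) : ℝ :=
  ∫ x in Ω, ‖iteratedFDeriv ℝ 2 F x‖ ^ p

/-- The seminorm `‖F‖_{L^{2,p}(Ω)}`. -/
def sobNorm (p : ℝ) (Ω : Set Pt) (F : Pt → ℝ) : ℝ := sobEnergy p Ω F ^ (1 / p)

/-- Membership in the homogeneous Sobolev space `L^{2,p}(ℝ²)` (we work with `C²`
representatives with finite seminorm). -/
def MemSob (p : ℝ) (F : Pt → ℝ) : Prop :=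
  ContDiff ℝ 2 F ∧ Integrable fun x => ‖iteratedFDeriv ℝ 2 F x‖ ^ p

/-- The trace seminorm `‖f‖_{L^{2,p}(E)}` of `f : E → ℝ`. -/
def traceSobNorm (p : ℝ) (E : Set Pt) (f : E → ℝ) : ℝ :=
  sInf {c : ℝ | ∃ F : Pt → ℝ, MemSob p F ∧ (∀ y : E, F y.1 = f y) ∧ c = sobNorm p univ F}

/-- `T` is a linear extension operator `L^{2,p}(E) → L^{2,p}(ℝ²)` with norm bound `M`. -/
def IsExtOpPlane (p : ℝ) (E : Set Pt) (M : ℝ) (T : (E → ℝ) →ₗ[ℝ] (Pt → ℝ)) : Prop :=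
  ∀ f : E → ℝ, (∃ F : Pt → ℝ, MemSob p F ∧ ∀ y : E, F y.1 = f y) →
    MemSob p (T f) ∧ (∀ y : E, T f y.1 = f y) ∧
      sobNorm p univ (T f) ≤ M * traceSobNorm p E f

/-- `‖Φ‖_{L^{1,p}(V)}^p = ∑_{v ∈ V₀} |Φ(v) − Φ(π(v))|^p W_v^{2−p}`. -/
def treeEnergy (p : ℝ) (V : Finset (List ℕ)) (W : List ℕ → ℝ) (Φ : List ℕ → ℝ) : ℝ :=
  ∑ v ∈ V.erase [], |Φ v - Φ v.dropLast| ^ p * W v ^ (2 - p)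

def treeNorm (p : ℝ) (V : Finset (List ℕ)) (W : List ℕ → ℝ) (Φ : List ℕ → ℝ) : ℝ :=
  treeEnergy p V W Φ ^ (1 / p)

/-- The type of leaves of `V`. -/
def Leaves (V : Finset (List ℕ)) : Type := {v : List ℕ // IsLeaf V v}

/-- The trace seminorm `‖φ‖_{L^{1,p}(∂V)}`. -/
def treeTraceNorm (p : ℝ) (V : Finset (List ℕ)) (W : List ℕ → ℝ) (φ : Leaves V → ℝ) : ℝ :=
  sInf {c : ℝ | ∃ Φ : List ℕ → ℝ, (∀ v : Leaves V, Φ v.1 = φ v) ∧ c = treeNorm p V W Φ}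

/-- `H` is a linear extension operator `L^{1,p}(∂V) → L^{1,p}(V)` with norm bound `M`. -/
def IsExtOpTree (p : ℝ) (V : Finset (List ℕ)) (W : List ℕ → ℝ) (M : ℝ)
    (H : (Leaves V → ℝ) →ₗ[ℝ] (List ℕ → ℝ)) : Prop :=
  ∀ φ : Leaves V → ℝ,
    (∀ v : Leaves V, H φ v.1 = φ v) ∧ treeNorm p V W (H φ) ≤ M * treeTraceNorm p V W φ

/-- Longest common prefix of two strings (the lowest common ancestor). -/
def lcp : List ℕ → List ℕ → List ℕ
  | a :: as, b :: bs => if a = b then a :: lcp as bs else []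
  | _, _ => []

/-- The cluster `C_v ⊆ E₂` associated to a vertex `v ∈ V`. -/
def Cluster (N : ℕ) (V : Finset (List ℕ)) (W : List ℕ → ℝ) (v : List ℕ) : Set Pt :=
  {x | ∃ u, IsLeaf V u ∧ v <+: u ∧ x = pt (Psi N W u) (W u)}

/-- The average `(∂₂G)_S` of the vertical derivative of `G` over `S`. -/
def d2avg (S : Set Pt) (G : Pt → ℝ) : ℝ :=
  ⨍ x in S, fderiv ℝ G x (EuclideanSpace.single 1 1)

end

lemma prefix_cons {a : ℕ} {l₁ l₂ : List ℕ} (h : l₁ <+: l₂) : a :: l₁ <+: a :: l₂ := by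
  obtain ⟨t, ht⟩ := h; exact ⟨t, by simp [← ht]⟩

lemma lcp_cons_same (a : ℕ) (as bs : List ℕ) : lcp (a :: as) (a :: bs) = a :: lcp as bs := by
  simp [lcp]

lemma lcp_prefix : ∀ v w : List ℕ, lcp v w <+: v ∧ lcp v w <+: w := by
  intro v
  induction v with
  | nil => intro w; cases w <;> simp [lcp]
  | cons a as ih =>
    intro w
    cases w with
    | nil => simp [lcp]
    | cons b bs =>
      by_cases hab : a = b
      · subst hab
        rw [lcp_cons_same]
        exact ⟨prefix_cons (ih bs).1, prefix_cons (ih bs).2⟩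
      · simp [lcp, hab]

lemma lcp_spec : ∀ v w : List ℕ, ¬ v <+: w → ¬ w <+: v →
    (lcp v w).length < v.length ∧ (lcp v w).length < w.length ∧
      v.getD (lcp v w).length 0 ≠ w.getD (lcp v w).length 0 := by
  intro v
  induction v with
  | nil => intro w h1 _; exact absurd (List.nil_prefix) h1
  | cons a as ih =>
    intro w h1 h2
    cases w with
    | nil => exact absurd (List.nil_prefix) h2
    | cons b bs =>
      by_cases hab : a = b
      · subst hab
        have h1' : ¬ as <+: bs := fun h => h1 (prefix_cons h)
        have h2' : ¬ bs <+: as := fun h => h2 (prefix_cons h)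
        obtain ⟨l1, l2, l3⟩ := ih bs h1' h2'
        rw [lcp_cons_same]
        simp only [List.length_cons, List.getD_cons_succ]
        exact ⟨by omega, by omega, l3⟩
      · simp [lcp, hab]

lemma getD_take' (l : List ℕ) (i m : ℕ) (h : i < m) : (l.take m).getD i 0 = l.getD i 0 := by
  simp [List.getD_eq_getElem?_getD, List.getElem?_take, h]

lemma take_succ_eq (l : List ℕ) (n : ℕ) (h : n < l.length) :
    l.take (n+1) = l.take n ++ [l.getD n 0] := by
  rw [List.take_succ, List.getD_eq_getElem l 0 h, List.getElem?_eq_getElem h]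
  rfl

lemma dropLast_take' (l : List ℕ) (n : ℕ) (h : n < l.length) :
    (l.take (n+1)).dropLast = l.take n := by
  rw [List.dropLast_eq_take, List.take_take, List.length_take]
  congr 1
  omega

lemma leaf_not_prefix {N : ℕ} {V : Finset (List ℕ)} (hT : IsNaryTree N V) {v w : List ℕ}
    (hv : IsLeaf V v) (hw : w ∈ V) (hne : v ≠ w) : ¬ v <+: w := by
  intro hpre
  have hvw : v = w.take v.length := List.prefix_iff_eq_take.mp hpre
  have hlt : v.length < w.length := by
    have := hpre.length_le
    rcases lt_or_eq_of_le this with h | h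
    · exact h
    · exfalso; apply hne; rw [hvw, h, List.take_length]
  have hmem : w.take (v.length + 1) ∈ V := hT.2.1 w hw _ (List.take_prefix _ _)
  rw [take_succ_eq w v.length hlt, ← hvw] at hmem
  exact hv.2 _ hmem

lemma mygeom_le {ε : ℝ} (h0 : 0 ≤ ε) (h : ε ≤ 1/2) (k : ℕ) : ∑ j ∈ Finset.range k, ε^j ≤ 2 := by
  induction k with
  | zero => simp
  | succ n ih =>
    rw [Finset.sum_range_succ']
    simp only [pow_zero]
    have : ∑ i ∈ Finset.range n, ε ^ (i + 1) = ε * ∑ i ∈ Finset.range n, ε ^ i := by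
      rw [Finset.mul_sum]; exact Finset.sum_congr rfl fun i _ => by ring
    rw [this]
    nlinarith [Finset.sum_nonneg (fun i (_ : i ∈ Finset.range n) => pow_nonneg h0 i)]

lemma decay_step {V : Finset (List ℕ)} {W : List ℕ → ℝ} {ε : ℝ} {N : ℕ}
    (hT : IsNaryTree N V) (hW : RadiallyDecaying V W ε) {v : List ℕ} (hv : v ∈ V)
    {i : ℕ} (hi : i < v.length) : W (v.take (i+1)) ≤ ε * W (v.take i) := by
  have hmem : v.take (i+1) ∈ V := hT.2.1 v hv _ (List.take_prefix _ _)
  have hne : v.take (i+1) ≠ [] := by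
    have : (v.take (i+1)).length = i+1 := by rw [List.length_take]; omega
    intro h; rw [h] at this; simp at this
  have := hW.2.2 _ hmem hne
  rwa [dropLast_take' v i hi] at this

lemma decay_pow {V : Finset (List ℕ)} {W : List ℕ → ℝ} {ε : ℝ} {N : ℕ}
    (hT : IsNaryTree N V) (hW : RadiallyDecaying V W ε) (hε : 0 < ε) {v : List ℕ} (hv : v ∈ V)
    (m : ℕ) : ∀ i, m ≤ i → i ≤ v.length → W (v.take i) ≤ ε^(i-m) * W (v.take m) := by
  intro i
  induction i with
  | zero => intro h1 _; interval_cases m; simp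
  | succ n ih =>
    intro h1 h2
    rcases Nat.eq_or_lt_of_le h1 with h | h
    · rw [← h]; simp
    · have hn : m ≤ n := by omega
      have h3 : W (v.take (n+1)) ≤ ε * W (v.take n) := decay_step hT hW hv (by omega)
      have h4 := ih hn (by omega)
      have : n + 1 - m = (n - m) + 1 := by omega
      rw [this, pow_succ]
      calc W (v.take (n+1)) ≤ ε * W (v.take n) := h3
        _ ≤ ε * (ε^(n-m) * W (v.take m)) := by
            exact mul_le_mul_of_nonneg_left h4 hε.le
        _ = ε^(n-m) * ε * W (v.take m) := by ring

lemma digit_lt {N : ℕ} {V : Finset (List ℕ)} (hT : IsNaryTree N V) {v : List ℕ} (hv : v ∈ V)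
    {i : ℕ} (hi : i < v.length) : v.getD i 0 < N := by
  apply hT.2.2.1 v hv
  rw [List.getD_eq_getElem v 0 hi]
  exact List.getElem_mem hi

lemma tail_bound {N : ℕ} {V : Finset (List ℕ)} {W : List ℕ → ℝ} {ε : ℝ}
    (hN : 2 ≤ N) (hT : IsNaryTree N V) (hW : RadiallyDecaying V W ε)
    (hε : 0 < ε) (hε2 : ε ≤ 1/2) {v : List ℕ} (hv : v ∈ V) {m : ℕ} (hm : m ≤ v.length) :
    |∑ i ∈ Finset.Ico (m+1) v.length, W (v.take i) * (v.getD i 0 : ℝ) / ((N:ℝ) - 1)|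
      ≤ 2 * ε * W (v.take m) := by
  have hN1 : (0:ℝ) < (N:ℝ) - 1 := by
    have : (2:ℝ) ≤ N := by exact_mod_cast hN
    linarith
  have hWm : 0 < W (v.take m) := hW.2.1 _ (hT.2.1 v hv _ (List.take_prefix _ _))
  calc |∑ i ∈ Finset.Ico (m+1) v.length, W (v.take i) * (v.getD i 0 : ℝ) / ((N:ℝ) - 1)|
      ≤ ∑ i ∈ Finset.Ico (m+1) v.length, |W (v.take i) * (v.getD i 0 : ℝ) / ((N:ℝ) - 1)| :=
        Finset.abs_sum_le_sum_abs _ _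
    _ ≤ ∑ i ∈ Finset.Ico (m+1) v.length, ε^(i-m) * W (v.take m) := by
        apply Finset.sum_le_sum
        intro i hi
        rw [Finset.mem_Ico] at hi
        have hWi : 0 < W (v.take i) := hW.2.1 _ (hT.2.1 v hv _ (List.take_prefix _ _))
        have hd : (v.getD i 0 : ℝ) ≤ (N:ℝ) - 1 := by
          have := digit_lt hT hv hi.2
          have : (v.getD i 0 : ℝ) ≤ (N:ℝ) - 1 := by
            have h' : v.getD i 0 + 1 ≤ N := this
            have : ((v.getD i 0 : ℕ) : ℝ) + 1 ≤ (N:ℝ) := by exact_mod_cast h'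
            linarith
          exact this
        have hd0 : (0:ℝ) ≤ (v.getD i 0 : ℝ) := Nat.cast_nonneg _
        have habs : |W (v.take i) * (v.getD i 0 : ℝ) / ((N:ℝ) - 1)|
            = W (v.take i) * (v.getD i 0 : ℝ) / ((N:ℝ) - 1) := by
          apply abs_of_nonneg
          positivity
        rw [habs]
        have h1 : W (v.take i) * (v.getD i 0 : ℝ) / ((N:ℝ) - 1) ≤ W (v.take i) := by
          rw [div_le_iff₀ hN1]
          nlinarith
        calc W (v.take i) * (v.getD i 0 : ℝ) / ((N:ℝ) - 1) ≤ W (v.take i) := h1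
          _ ≤ ε^(i-m) * W (v.take m) := decay_pow hT hW hε hv m i (by omega) (by omega)
    _ = W (v.take m) * ∑ j ∈ Finset.range (v.length - (m+1)), ε^(j+1) := by
        rw [Finset.sum_Ico_eq_sum_range, Finset.mul_sum]
        apply Finset.sum_congr rfl
        intro j _
        rw [mul_comm]
        congr 2
        omega
    _ = W (v.take m) * (ε * ∑ j ∈ Finset.range (v.length - (m+1)), ε^j) := by
        rw [Finset.mul_sum, Finset.mul_sum, Finset.mul_sum]
        apply Finset.sum_congr rfl
        intro j _
        ring
    _ ≤ W (v.take m) * (ε * 2) := by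
        apply mul_le_mul_of_nonneg_left _ hWm.le
        exact mul_le_mul_of_nonneg_left (mygeom_le hε.le hε2 _) hε.le
    _ = 2 * ε * W (v.take m) := by ring

set_option maxHeartbeats 1000000 in
/-- part of Lemma 2 of the paper: two-sided bound on `|Ψ(w) − Ψ(v)|`
in terms of the weight of the lowest common ancestor. -/
theorem statement3 :
    ∃ k₀ K : ℝ, 0 < k₀ ∧ 1 < K ∧
      ∀ (N : ℕ) (V : Finset (List ℕ)) (W : List ℕ → ℝ) (ε : ℝ),
        TreeHyp k₀ N V W ε →
          ∀ v w : List ℕ, IsLeaf V v → IsLeaf V w → v ≠ w →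
            K⁻¹ * W (lcp v w) / N ≤ |Psi N W w - Psi N W v| ∧
            |Psi N W w - Psi N W v| ≤ K * W (lcp v w) := by
  refine ⟨1/8, 2, by norm_num, by norm_num, ?_⟩
  intro N V W ε hT v w hv hw hne
  obtain ⟨hN, hTree, hε, hεN, hW⟩ := hT
  have hvV := hv.1
  have hwV := hw.1
  have hnp1 : ¬ v <+: w := leaf_not_prefix hTree hv hwV hne
  have hnp2 : ¬ w <+: v := leaf_not_prefix hTree hw hvV (Ne.symm hne)
  set u := lcp v w with hu
  obtain ⟨hmv, hmw, hdig⟩ := lcp_spec v w hnp1 hnp2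
  rw [← hu] at hmv hmw hdig
  set m := u.length with hm
  have huv : u = v.take m := List.prefix_iff_eq_take.mp (lcp_prefix v w).1
  have huw : u = w.take m := List.prefix_iff_eq_take.mp (lcp_prefix v w).2
  have huV : u ∈ V := hTree.2.1 v hvV u (lcp_prefix v w).1
  have hWu : 0 < W u := hW.2.1 u huV
  have hNR : (2:ℝ) ≤ (N:ℝ) := by exact_mod_cast hN
  have hN1 : (0:ℝ) < (N:ℝ) - 1 := by linarith
  have hNpos : (0:ℝ) < (N:ℝ) := by linarith
  have hεN' : ε ≤ (1/8) / (N:ℝ) := hεN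
  have hε2 : ε ≤ 1/2 := by
    have : (1/8 : ℝ) / (N:ℝ) ≤ (1/8) / 2 := by
      apply div_le_div_of_nonneg_left (by norm_num) (by norm_num) hNR
    linarith
  have hε8 : 8 * ε * (N:ℝ) ≤ 1 := by
    have h1 : ε * (N:ℝ) ≤ ((1/8) / (N:ℝ)) * (N:ℝ) :=
      mul_le_mul_of_nonneg_right hεN' hNpos.le
    have h2 : ((1/8) / (N:ℝ)) * (N:ℝ) = 1/8 := by
      field_simp
    nlinarith
  have hε16 : ε ≤ 1/16 := by nlinarith
  -- notation for the pieces
  set Tv := ∑ i ∈ Finset.Ico (m+1) v.length, W (v.take i) * (v.getD i 0 : ℝ) / ((N:ℝ)-1) with hTv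
  set Tw := ∑ i ∈ Finset.Ico (m+1) w.length, W (w.take i) * (w.getD i 0 : ℝ) / ((N:ℝ)-1) with hTw
  set D := W u * ((w.getD m 0 : ℝ) - (v.getD m 0 : ℝ)) / ((N:ℝ)-1) with hD
  have hsplit : ∀ x : List ℕ, m < x.length →
      Psi N W x = (∑ i ∈ Finset.range m, W (x.take i) * (x.getD i 0 : ℝ) / ((N:ℝ)-1))
        + W (x.take m) * (x.getD m 0 : ℝ) / ((N:ℝ)-1)
        + ∑ i ∈ Finset.Ico (m+1) x.length, W (x.take i) * (x.getD i 0 : ℝ) / ((N:ℝ)-1) := by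
    intro x hx
    unfold Psi
    rw [Finset.range_eq_Ico,
      ← Finset.sum_Ico_consecutive (fun i => W (x.take i) * (x.getD i 0 : ℝ) / ((N:ℝ)-1))
        (Nat.zero_le (m+1)) hx,
      ← Finset.range_eq_Ico, Finset.sum_range_succ]
  have hhead : (∑ i ∈ Finset.range m, W (v.take i) * (v.getD i 0 : ℝ) / ((N:ℝ)-1))
      = ∑ i ∈ Finset.range m, W (w.take i) * (w.getD i 0 : ℝ) / ((N:ℝ)-1) := by
    apply Finset.sum_congr rfl
    intro i hi
    rw [Finset.mem_range] at hi
    have htv : v.take i = u.take i := by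
      rw [huv, List.take_take]
      congr 1
      omega
    have htw : w.take i = u.take i := by
      rw [huw, List.take_take]
      congr 1
      omega
    have hgv : v.getD i 0 = u.getD i 0 := by
      rw [huv, getD_take' v i m hi]
    have hgw : w.getD i 0 = u.getD i 0 := by
      rw [huw, getD_take' w i m hi]
    rw [htv, htw, hgv, hgw]
  have hdiff : Psi N W w - Psi N W v = D + Tw - Tv := by
    rw [hsplit v hmv, hsplit w hmw, hhead, ← huv, ← huw, hD]
    ring
  -- bounds on D
  have hd1 : (1:ℝ) ≤ |(w.getD m 0 : ℝ) - (v.getD m 0 : ℝ)| := by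
    rcases Nat.lt_or_ge (v.getD m 0) (w.getD m 0) with h | h
    · have : (v.getD m 0 : ℝ) + 1 ≤ (w.getD m 0 : ℝ) := by exact_mod_cast h
      rw [abs_of_nonneg (by linarith)]
      linarith
    · have hlt : w.getD m 0 < v.getD m 0 := lt_of_le_of_ne h (Ne.symm hdig)
      have : (w.getD m 0 : ℝ) + 1 ≤ (v.getD m 0 : ℝ) := by exact_mod_cast hlt
      rw [abs_of_nonpos (by linarith)]
      linarith
  have hdub : |(w.getD m 0 : ℝ) - (v.getD m 0 : ℝ)| ≤ (N:ℝ) - 1 := by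
    have h1 : (w.getD m 0 : ℝ) ≤ (N:ℝ) - 1 := by
      have := digit_lt hTree hwV hmw
      have : ((w.getD m 0 : ℕ) : ℝ) + 1 ≤ (N:ℝ) := by exact_mod_cast this
      linarith
    have h2 : (v.getD m 0 : ℝ) ≤ (N:ℝ) - 1 := by
      have := digit_lt hTree hvV hmv
      have : ((v.getD m 0 : ℕ) : ℝ) + 1 ≤ (N:ℝ) := by exact_mod_cast this
      linarith
    have h3 : (0:ℝ) ≤ (w.getD m 0 : ℝ) := Nat.cast_nonneg _
    have h4 : (0:ℝ) ≤ (v.getD m 0 : ℝ) := Nat.cast_nonneg _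
    rw [abs_le]
    constructor <;> linarith
  have hDabs : |D| = W u * |(w.getD m 0 : ℝ) - (v.getD m 0 : ℝ)| / ((N:ℝ)-1) := by
    rw [hD, abs_div, abs_mul, abs_of_pos hWu, abs_of_pos hN1]
  have hDlow : W u / ((N:ℝ)-1) ≤ |D| := by
    rw [hDabs, div_le_div_iff₀ hN1 hN1]
    nlinarith [mul_le_mul_of_nonneg_right (mul_le_mul_of_nonneg_left hd1 hWu.le) hN1.le]
  have hDhigh : |D| ≤ W u := by
    rw [hDabs, div_le_iff₀ hN1]
    nlinarith
  -- tail bounds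
  have hTvb : |Tv| ≤ 2 * ε * W u := by
    have := tail_bound hN hTree hW hε hε2 hvV (le_of_lt hmv)
    rwa [← huv] at this
  have hTwb : |Tw| ≤ 2 * ε * W u := by
    have := tail_bound hN hTree hW hε hε2 hwV (le_of_lt hmw)
    rwa [← huw] at this
  rw [hdiff]
  have habs1 : |D| - |Tw| - |Tv| ≤ |D + Tw - Tv| := by
    have h1 : |D| ≤ |D + Tw - Tv| + |Tw - Tv| := by
      have := abs_add_le (D + Tw - Tv) (-(Tw - Tv))
      simp only [abs_neg] at this
      calc |D| = |(D + Tw - Tv) + -(Tw - Tv)| := by ring_nf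
        _ ≤ |D + Tw - Tv| + |Tw - Tv| := this
    have h2 : |Tw - Tv| ≤ |Tw| + |Tv| := abs_sub _ _
    linarith
  have habs2 : |D + Tw - Tv| ≤ |D| + |Tw| + |Tv| := by
    have h1 : |D + Tw - Tv| ≤ |D| + |Tw - Tv| := by
      calc |D + Tw - Tv| = |D + (Tw - Tv)| := by ring_nf
        _ ≤ |D| + |Tw - Tv| := abs_add_le _ _
    have h2 : |Tw - Tv| ≤ |Tw| + |Tv| := abs_sub _ _
    linarith
  clear hsplit hhead hdiff hTv hTw hD hu huv huw hm hεN hεN' hε2 hW hTree hv hw hnp1 hnp2 hdig hd1 hdub hDabs hvV hwV hne hmv hmw huV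
  clear_value Tv Tw D u m
  clear v w V
  constructor
  · -- lower bound
    have key : (2:ℝ)⁻¹ * W u / N ≤ W u / ((N:ℝ)-1) - 4 * ε * W u := by
      have h1 : W u / (N:ℝ) ≤ W u / ((N:ℝ)-1) := by
        rw [div_le_div_iff₀ hNpos hN1]
        nlinarith
      have h2 : 4 * ε * W u ≤ W u / (2 * (N:ℝ)) := by
        rw [le_div_iff₀ (by positivity : (0:ℝ) < 2 * (N:ℝ))]
        nlinarith [mul_le_mul_of_nonneg_right hε8 hWu.le]
      have h3 : (2:ℝ)⁻¹ * W u / N = W u / (N:ℝ) - W u / (2 * (N:ℝ)) := by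
        field_simp
        ring
      linarith
    linarith
  · -- upper bound
    have h4 : 4 * ε * W u ≤ W u := by nlinarith [mul_le_mul_of_nonneg_right hε16 hWu.le]
    linarith
end

section
/- In the setting of the Whitney decomposition 𝒲 of Q⁰ associated to the set E (with ε ≤ k₀/N for an absolute constant k₀): every Q ∈ 𝒲 satisfies δ_Q ≥ Δ/20. -/
open MeasureTheory Set Metric
open scoped Classical

/-! ### Auxiliary lemmas for statement6 -/

private lemma dist_coord_le (x y : Pt) (i : Fin 2) : |x i - y i| ≤ dist x y := by
  rw [EuclideanSpace.dist_eq, ← Real.sqrt_sq (abs_nonneg (x i - y i))]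
  apply Real.sqrt_le_sqrt
  have h : |x i - y i| ^ 2 = dist (x i) (y i) ^ 2 := by rw [Real.dist_eq]
  rw [h]
  exact Finset.single_le_sum (f := fun j => dist (x j) (y j) ^ 2)
    (fun j _ => sq_nonneg _) (Finset.mem_univ i)

private lemma dist_le_of_coords (x y : Pt) (c : ℝ) (hc : 0 ≤ c)
    (h0 : |x 0 - y 0| ≤ c) (h1 : |x 1 - y 1| ≤ c) : dist x y ≤ 2 * c := by
  rw [EuclideanSpace.dist_eq]
  have hs : ∑ i : Fin 2, dist (x i) (y i) ^ 2 ≤ (2 * c) ^ 2 := by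
    rw [Fin.sum_univ_two, Real.dist_eq, Real.dist_eq]
    nlinarith [sq_abs (x 0 - y 0), sq_abs (x 1 - y 1), abs_nonneg (x 0 - y 0),
      abs_nonneg (x 1 - y 1)]
  calc √(∑ i : Fin 2, dist (x i) (y i) ^ 2) ≤ √((2 * c) ^ 2) := Real.sqrt_le_sqrt hs
    _ = 2 * c := Real.sqrt_sq (by linarith)

private lemma pt_ext {x y : Pt} (h0 : x 0 = y 0) (h1 : x 1 = y 1) : x = y := by
  ext i
  fin_cases i
  · exact h0
  · exact h1

private lemma pt_apply0 (a b : ℝ) : pt a b 0 = a := by simp [pt]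
private lemma pt_apply1 (a b : ℝ) : pt a b 1 = b := by simp [pt]

private lemma exists_diff_index : ∀ (a b : List ℕ), ¬ a <+: b → ¬ b <+: a →
    ∃ m, m < a.length ∧ m < b.length ∧ a.take m = b.take m ∧ a.getD m 0 ≠ b.getD m 0
  | [], b, ha, _ => absurd (List.nil_prefix) ha
  | _ :: _, [], _, hb => absurd (List.nil_prefix) hb
  | a :: as, b :: bs, ha, hb => by
    by_cases hab : a = b
    · subst hab
      have ha' : ¬ as <+: bs := fun h => ha (List.cons_prefix_cons.mpr ⟨rfl, h⟩)
      have hb' : ¬ bs <+: as := fun h => hb (List.cons_prefix_cons.mpr ⟨rfl, h⟩)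
      obtain ⟨m, h1, h2, h3, h4⟩ := exists_diff_index as bs ha' hb'
      refine ⟨m + 1, by simpa using h1, by simpa using h2, ?_, ?_⟩
      · rw [List.take_succ_cons, List.take_succ_cons, h3]
      · rwa [List.getD_cons_succ, List.getD_cons_succ]
    · exact ⟨0, by simp, by simp, by simp, by simpa using hab⟩

private lemma nat_cast_abs_sub_ge_one {d d' : ℕ} (h : d ≠ d') : (1:ℝ) ≤ |(d:ℝ) - (d':ℝ)| := by
  rcases Nat.lt_or_ge d d' with hlt | hge
  · have h1 : (d:ℝ) + 1 ≤ (d':ℝ) := by exact_mod_cast hlt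
    rw [abs_sub_comm, abs_of_nonneg (by linarith)]; linarith
  · have hlt : d' < d := lt_of_le_of_ne hge (Ne.symm h)
    have h1 : (d':ℝ) + 1 ≤ (d:ℝ) := by exact_mod_cast hlt
    rw [abs_of_nonneg (by linarith)]; linarith

private lemma geom_tail_le {ε : ℝ} (h0 : 0 ≤ ε) (h2 : ε ≤ 1/2) (m L : ℕ) :
    ∑ i ∈ Finset.Ico (m+1) L, ε ^ (i - m) ≤ 2 * ε := by
  rw [Finset.sum_Ico_eq_sum_range]
  have heq : ∀ j ∈ Finset.range (L - (m+1)), ε ^ (m + 1 + j - m) = ε * ε ^ j := by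
    intro j _
    rw [show m + 1 + j - m = j + 1 by omega, pow_succ]; ring
  rw [Finset.sum_congr rfl heq, ← Finset.mul_sum]
  have hsum : ∑ j ∈ Finset.range (L - (m+1)), ε ^ j ≤ 2 := by
    calc ∑ j ∈ Finset.range (L - (m+1)), ε ^ j
        ≤ ∑ j ∈ Finset.range (L - (m+1)), (1/2:ℝ) ^ j :=
          Finset.sum_le_sum fun j _ => pow_le_pow_left₀ h0 h2 j
      _ ≤ 2 := sum_geometric_two_le _
  nlinarith

private lemma W_take_le {N : ℕ} {V : Finset (List ℕ)} {W : List ℕ → ℝ} {ε : ℝ}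
    (hV : IsNaryTree N V) (hW : RadiallyDecaying V W ε) (hε0 : 0 ≤ ε)
    (v : List ℕ) (hv : v ∈ V) (i : ℕ) :
    ∀ d : ℕ, i + d ≤ v.length → W (v.take (i + d)) ≤ ε ^ d * W (v.take i) := by
  intro d
  induction d with
  | zero => intro _; simp
  | succ d ih =>
    intro h
    have hd : i + d ≤ v.length := by omega
    have h1 : v.take (i + (d+1)) ∈ V := hV.2.1 v hv _ (List.take_prefix _ _)
    have hne : v.take (i + (d+1)) ≠ [] := by
      apply List.ne_nil_of_length_pos
      rw [List.length_take]; omega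
    have hdrop : (v.take (i + (d+1))).dropLast = v.take (i+d) := by
      rcases lt_or_eq_of_le h with hlt | heq
      · rw [List.dropLast_take hlt]; congr 1
      · rw [heq, List.take_length, List.dropLast_eq_take]; congr 1; omega
    have hstep := hW.2.2 _ h1 hne
    rw [hdrop] at hstep
    have hWd : W (v.take (i+d)) ≤ ε ^ d * W (v.take i) := ih hd
    have hWpos : 0 < W (v.take (i+d)) := hW.2.1 _ (hV.2.1 v hv _ (List.take_prefix _ _))
    calc W (v.take (i + (d+1))) ≤ ε * W (v.take (i+d)) := hstep
      _ ≤ ε * (ε ^ d * W (v.take i)) := mul_le_mul_of_nonneg_left hWd hε0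
      _ = ε ^ (d+1) * W (v.take i) := by ring


set_option maxHeartbeats 1000000 in
/-- every Whitney square satisfies `δ_Q ≥ Δ/20`. -/
theorem statement6 :
    ∃ k₀ : ℝ, 0 < k₀ ∧
      ∀ (N : ℕ) (V : Finset (List ℕ)) (W : List ℕ → ℝ) (ε : ℝ),
        TreeHyp k₀ N V W ε → DepthAtLeastOne V →
          ∀ Q : DSquare, InWhitney (Eset N V W) Q → Delta V W / 20 ≤ Q.side := by
  refine ⟨1/100, by norm_num, ?_⟩
  intro N V W ε hT hD Q hQ
  obtain ⟨hN, hV, hε0, hεk, hW⟩ := hT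
  have hNR : (2:ℝ) ≤ (N:ℝ) := by exact_mod_cast hN
  have hN1 : (1:ℝ) ≤ (N:ℝ) - 1 := by linarith
  have hεN : ε * N ≤ 1/100 := by
    rw [div_div] at hεk
    calc ε * N ≤ (1 / (100 * N)) * N := by
          apply mul_le_mul_of_nonneg_right hεk (by positivity)
      _ = 1/100 := by
          have hNpos : (0:ℝ) < N := by linarith
          field_simp
  have hε2 : ε ≤ 1/200 := by nlinarith
  -- leaf of maximal length
  obtain ⟨a0, ha0⟩ := hD
  have hVne : V.Nonempty := ⟨[a0], ha0⟩
  obtain ⟨v0, hv0V, hv0max⟩ := Finset.exists_max_image V (fun v => v.length) hVne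
  have hv0leaf : IsLeaf V v0 := by
    refine ⟨hv0V, fun a hc => ?_⟩
    have := hv0max _ hc
    simp [List.length_append] at this
  have hv0len : 1 ≤ v0.length := by
    have := hv0max _ ha0; simpa using this
  -- facts about Δ
  set Δ := Delta V W with hΔdef
  set S : Set ℝ := {w : ℝ | ∃ v, IsLeaf V v ∧ w = W v} with hSdef
  have hSsub : S ⊆ W '' ↑V := by
    rintro w ⟨v, hv, he⟩; exact ⟨v, hv.1, he.symm⟩
  have hSfin : S.Finite := (V.finite_toSet.image W).subset hSsub
  have hSne : S.Nonempty := ⟨W v0, v0, hv0leaf, rfl⟩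
  have hΔS : Δ = sInf S := rfl
  have hΔmem : Δ ∈ S := by rw [hΔS]; exact hSne.csInf_mem hSfin
  obtain ⟨vΔ, hvΔ, hΔeq⟩ := hΔmem
  have hΔpos : 0 < Δ := hΔeq ▸ hW.2.1 vΔ hvΔ.1
  have hΔle : ∀ v, IsLeaf V v → Δ ≤ W v := by
    intro v hv
    rw [hΔS]
    exact csInf_le hSfin.bddBelow ⟨v, hv, rfl⟩
  -- every leaf is nonempty (the root is not a leaf) and weights ≤ ε
  have hleaf_ne : ∀ v, IsLeaf V v → v ≠ [] := by
    intro v hv hc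
    subst hc
    exact hv.2 a0 (by simpa using ha0)
  have hWleaf : ∀ v, IsLeaf V v → W v ≤ ε := by
    intro v hv
    have h := W_take_le hV hW hε0.le v hv.1 0 v.length (by simp)
    rw [Nat.zero_add, List.take_length, List.take_zero, hW.1, mul_one] at h
    have hlen : 1 ≤ v.length := List.length_pos_iff.mpr (hleaf_ne v hv)
    calc W v ≤ ε ^ v.length := h
      _ ≤ ε ^ 1 := pow_le_pow_of_le_one hε0.le (by linarith) hlen
      _ = ε := pow_one ε
  have hΔsmall : Δ ≤ 1/200 := le_trans (hΔle v0 hv0leaf) (le_trans (hWleaf v0 hv0leaf) hε2)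
  -- digits are < N
  have hdig : ∀ v, v ∈ V → ∀ i, i < v.length → (v.getD i 0 : ℝ) ≤ (N:ℝ) - 1 := by
    intro v hv i hi
    have h1 : v.getD i 0 < N := by
      rw [List.getD_eq_getElem _ _ hi]
      exact hV.2.2.1 v hv _ (List.getElem_mem hi)
    have h2 : (v.getD i 0 : ℝ) + 1 ≤ (N:ℝ) := by exact_mod_cast h1
    linarith
  -- tail bound
  have tailb : ∀ v, v ∈ V → ∀ m, m ≤ v.length →
      |∑ i ∈ Finset.Ico (m+1) v.length, W (v.take i) * (v.getD i 0 : ℝ) / ((N:ℝ) - 1)|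
        ≤ 2 * ε * W (v.take m) := by
    intro v hv m hm
    have hWm : 0 < W (v.take m) := hW.2.1 _ (hV.2.1 v hv _ (List.take_prefix _ _))
    calc |∑ i ∈ Finset.Ico (m+1) v.length, W (v.take i) * (v.getD i 0 : ℝ) / ((N:ℝ) - 1)|
        ≤ ∑ i ∈ Finset.Ico (m+1) v.length, |W (v.take i) * (v.getD i 0 : ℝ) / ((N:ℝ) - 1)| :=
          Finset.abs_sum_le_sum_abs _ _
      _ ≤ ∑ i ∈ Finset.Ico (m+1) v.length, ε ^ (i - m) * W (v.take m) := by
          apply Finset.sum_le_sum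
          intro i hi
          rw [Finset.mem_Ico] at hi
          have hWi : 0 < W (v.take i) := hW.2.1 _ (hV.2.1 v hv _ (List.take_prefix _ _))
          have hd0 : (0:ℝ) ≤ (v.getD i 0 : ℝ) := Nat.cast_nonneg _
          have hdN : (v.getD i 0 : ℝ) ≤ (N:ℝ) - 1 := hdig v hv i (by omega)
          have habs : |W (v.take i) * (v.getD i 0 : ℝ) / ((N:ℝ) - 1)|
              = W (v.take i) * (v.getD i 0 : ℝ) / ((N:ℝ) - 1) := by
            apply abs_of_nonneg
            apply div_nonneg (mul_nonneg hWi.le hd0) (by linarith)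
          rw [habs]
          have h1 : W (v.take i) * (v.getD i 0 : ℝ) / ((N:ℝ) - 1) ≤ W (v.take i) := by
            rw [div_le_iff₀ (by linarith : (0:ℝ) < (N:ℝ) - 1)]
            nlinarith
          have h2 : W (v.take i) ≤ ε ^ (i - m) * W (v.take m) := by
            have := W_take_le hV hW hε0.le v hv m (i - m) (by omega)
            rwa [show m + (i - m) = i by omega] at this
          linarith
      _ = (∑ i ∈ Finset.Ico (m+1) v.length, ε ^ (i - m)) * W (v.take m) := by
          rw [Finset.sum_mul]
      _ ≤ (2 * ε) * W (v.take m) := by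
          apply mul_le_mul_of_nonneg_right (geom_tail_le hε0.le (by linarith) _ _) hWm.le
      _ = 2 * ε * W (v.take m) := by ring
  -- a leaf that is a prefix of an element of V equals it
  have hnp : ∀ p q : List ℕ, IsLeaf V p → q ∈ V → p <+: q → p = q := by
    intro p q hp hq hpq
    obtain ⟨t, ht⟩ := hpq
    cases t with
    | nil => simpa using ht
    | cons a t' =>
      exfalso
      apply hp.2 a
      apply hV.2.1 q hq
      exact ⟨t', by rw [← ht]; simp⟩
  -- split of Psi
  have hsplit : ∀ (v : List ℕ) (m : ℕ), m < v.length →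
      Psi N W v = (∑ i ∈ Finset.range m, W (v.take i) * (v.getD i 0 : ℝ) / ((N:ℝ) - 1))
        + W (v.take m) * (v.getD m 0 : ℝ) / ((N:ℝ) - 1)
        + ∑ i ∈ Finset.Ico (m+1) v.length, W (v.take i) * (v.getD i 0 : ℝ) / ((N:ℝ) - 1) := by
    intro v m hm
    rw [Psi, ← Finset.sum_range_succ (fun i => W (v.take i) * (v.getD i 0 : ℝ) / ((N:ℝ) - 1)) m,
      Finset.range_eq_Ico, Finset.range_eq_Ico]
    exact (Finset.sum_Ico_consecutive _ (Nat.zero_le _) (by omega : m + 1 ≤ v.length)).symm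
  -- Separation: any two distinct points of E are at distance ≥ Δ
  have hsep : ∀ x ∈ Eset N V W, ∀ y ∈ Eset N V W, x ≠ y → Δ ≤ dist x y := by
    have hE2 : ∀ x y : Pt, x ∈ E2set N V W → y ∈ E2set N V W → x ≠ y → Δ ≤ dist x y := by
      rintro x y ⟨u, hu, rfl⟩ ⟨u', hu', rfl⟩ hxy
      have huu' : u ≠ u' := by rintro rfl; exact hxy rfl
      have hnpu : ¬ u <+: u' := fun h => huu' (hnp u u' hu hu'.1 h)
      have hnpu' : ¬ u' <+: u := fun h => huu' (hnp u' u hu' hu.1 h).symm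
      obtain ⟨m, hm1, hm2, htake, hdne⟩ := exists_diff_index u u' hnpu hnpu'
      set Ww := W (u.take m) with hWwdef
      have hWw : 0 < Ww := hW.2.1 _ (hV.2.1 u hu.1 _ (List.take_prefix _ _))
      -- head sums agree
      have htk : ∀ i, i ≤ m → u.take i = u'.take i := by
        intro i him
        have := congrArg (List.take i) htake
        rwa [List.take_take, List.take_take, min_eq_left him] at this
      have hgd : ∀ i, i < m → u.getD i 0 = u'.getD i 0 := by
        intro i him
        have hiu : i < u.length := by omega
        have hiu' : i < u'.length := by omega
        rw [List.getD_eq_getElem _ _ hiu, List.getD_eq_getElem _ _ hiu']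
        have h1 : (u.take m)[i]'(by rw [List.length_take]; omega) = u[i]'hiu :=
          List.getElem_take
        have h2 : (u'.take m)[i]'(by rw [List.length_take]; omega) = u'[i]'hiu' :=
          List.getElem_take
        rw [← h1, ← h2]
        congr 1
      have hhead : (∑ i ∈ Finset.range m, W (u.take i) * (u.getD i 0 : ℝ) / ((N:ℝ) - 1))
          = ∑ i ∈ Finset.range m, W (u'.take i) * (u'.getD i 0 : ℝ) / ((N:ℝ) - 1) := by
        apply Finset.sum_congr rfl
        intro i hi
        rw [Finset.mem_range] at hi
        rw [htk i hi.le, hgd i hi]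
      set T := ∑ i ∈ Finset.Ico (m+1) u.length, W (u.take i) * (u.getD i 0 : ℝ) / ((N:ℝ) - 1)
      set T' := ∑ i ∈ Finset.Ico (m+1) u'.length, W (u'.take i) * (u'.getD i 0 : ℝ) / ((N:ℝ) - 1)
      have hTb : |T| ≤ 2 * ε * Ww := tailb u hu.1 m hm1.le
      have hT'b : |T'| ≤ 2 * ε * Ww := by
        have := tailb u' hu'.1 m hm2.le
        rwa [← htk m le_rfl] at this
      set D := W (u.take m) * (u.getD m 0 : ℝ) / ((N:ℝ) - 1)
        - W (u'.take m) * (u'.getD m 0 : ℝ) / ((N:ℝ) - 1) with hDdef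
      have hPsidiff : Psi N W u - Psi N W u' = D + (T - T') := by
        rw [hsplit u m hm1, hsplit u' m hm2, hhead, hDdef]; ring
      -- lower bound on |D|
      have hDlb : Ww / ((N:ℝ) - 1) ≤ |D| := by
        have hone : (1:ℝ) ≤ |(u.getD m 0 : ℝ) - (u'.getD m 0 : ℝ)| := nat_cast_abs_sub_ge_one hdne
        have hDform : D = Ww * ((u.getD m 0 : ℝ) - (u'.getD m 0 : ℝ)) / ((N:ℝ) - 1) := by
          rw [hDdef, ← htk m le_rfl]; ring
        rw [hDform, abs_div, abs_mul, abs_of_nonneg hWw.le,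
          abs_of_nonneg (by linarith : (0:ℝ) ≤ (N:ℝ) - 1)]
        apply div_le_div_of_nonneg_right ?_ (by linarith)
        nlinarith
      -- lower bound on the Psi difference
      have hPlb : Ww / ((N:ℝ) - 1) - 4 * ε * Ww ≤ |Psi N W u - Psi N W u'| := by
        have h1 : |D| - |T - T'| ≤ |D + (T - T')| := by
          have h := abs_add_le (D + (T - T')) (T' - T)
          have he : D + (T - T') + (T' - T) = D := by ring
          rw [he] at h
          have hcomm : |T' - T| = |T - T'| := abs_sub_comm _ _
          linarith
        have h2 : |T - T'| ≤ |T| + |T'| := abs_sub T T'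
        rw [hPsidiff]
        linarith
      -- numerics: W u ≤ ε Ww, Δ ≤ W u
      have hWu : W u ≤ ε * Ww := by
        have h := W_take_le hV hW hε0.le u hu.1 m (u.length - m) (by omega)
        rw [show m + (u.length - m) = u.length by omega, List.take_length] at h
        have hεp : ε ^ (u.length - m) ≤ ε := by
          calc ε ^ (u.length - m) ≤ ε ^ 1 :=
                pow_le_pow_of_le_one hε0.le (by linarith) (by omega)
            _ = ε := pow_one ε
        calc W u ≤ ε ^ (u.length - m) * Ww := h
          _ ≤ ε * Ww := mul_le_mul_of_nonneg_right hεp hWw.le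
      have hΔWu : Δ ≤ W u := hΔle u hu
      have hkey : 5 * ε ≤ 1 / ((N:ℝ) - 1) := by
        rw [le_div_iff₀ (by linarith : (0:ℝ) < (N:ℝ) - 1)]
        nlinarith
      have hfin : Δ ≤ Ww / ((N:ℝ) - 1) - 4 * ε * Ww := by
        have h5 : 5 * ε * Ww ≤ (1 / ((N:ℝ) - 1)) * Ww :=
          mul_le_mul_of_nonneg_right hkey hWw.le
        have hdm : Ww / ((N:ℝ) - 1) = (1 / ((N:ℝ) - 1)) * Ww := by ring
        rw [hdm]
        nlinarith
      have hx0 : |pt (Psi N W u) (W u) 0 - pt (Psi N W u') (W u') 0|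
          = |Psi N W u - Psi N W u'| := by rw [pt_apply0, pt_apply0]
      calc Δ ≤ |Psi N W u - Psi N W u'| := le_trans hfin hPlb
        _ = |pt (Psi N W u) (W u) 0 - pt (Psi N W u') (W u') 0| := hx0.symm
        _ ≤ dist (pt (Psi N W u) (W u)) (pt (Psi N W u') (W u')) := dist_coord_le _ _ 0
    have hE12 : ∀ x y : Pt, x ∈ E1set Δ → y ∈ E2set N V W → Δ ≤ dist x y := by
      rintro x y ⟨_, _, hx1⟩ ⟨u, hu, rfl⟩
      have : Δ ≤ |x 1 - pt (Psi N W u) (W u) 1| := by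
        rw [pt_apply1, hx1]
        rw [abs_sub_comm, abs_of_nonneg (by simpa using (hW.2.1 u hu.1).le)]
        simpa using hΔle u hu
      exact le_trans this (dist_coord_le _ _ 1)
    rintro x (hx | hx) y (hy | hy) hxy
    · obtain ⟨⟨n, hn⟩, _, hx1⟩ := hx
      obtain ⟨⟨n', hn'⟩, _, hy1⟩ := hy
      have hnn' : n ≠ n' := by
        rintro rfl
        exact hxy (pt_ext (by rw [hn, hn']) (by rw [hx1, hy1]))
      have h1 : (1:ℝ) ≤ |(n:ℝ) - (n':ℝ)| := by
        have hz : n - n' ≠ 0 := sub_ne_zero.mpr hnn'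
        have := Int.one_le_abs hz
        have hcast : ((|n - n'| : ℤ) : ℝ) = |(n:ℝ) - (n':ℝ)| := by push_cast; ring_nf
        exact_mod_cast (by exact_mod_cast this : (1:ℝ) ≤ ((|n - n'| : ℤ) : ℝ)).trans_eq hcast
      have : Δ ≤ |x 0 - y 0| := by
        rw [hn, hn', ← sub_mul, abs_mul, abs_of_nonneg hΔpos.le]
        nlinarith
      exact le_trans this (dist_coord_le _ _ 0)
    · exact hE12 x y hx hy
    · rw [dist_comm]; exact hE12 y x hy hx
    · exact hE2 x y hx hy hxy
  -- Whitney part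
  obtain ⟨hsub, hanc⟩ := hQ
  have hside : Q.side = 8 / 2 ^ Q.k := rfl
  have hsidepos : 0 < Q.side := by rw [hside]; positivity
  rcases Nat.eq_zero_or_pos Q.k with hk0 | hkpos
  · have h8 : Q.side = 8 := by rw [hside, hk0]; norm_num
    rw [h8]; linarith
  · have hk' : Q.k - 1 < Q.k := by omega
    have hns := hanc (Q.k - 1) hk'
    rw [Set.not_subsingleton_iff] at hns
    obtain ⟨x, hx, y, hy, hxy⟩ := hns
    set A := Q.anc (Q.k - 1) hk'.le with hAdef
    have hA : A.side = 2 * Q.side := by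
      have hAside : A.side = 8 / 2 ^ (Q.k - 1) := rfl
      rw [hAside, hside, show Q.k = (Q.k - 1) + 1 by omega, pow_succ]
      have : (0:ℝ) < 2 ^ (Q.k - 1) := by positivity
      field_simp
      ring_nf
      congr 1
      omega
    have hApos : 0 < A.side := by linarith
    obtain ⟨hx3, hxE⟩ := hx
    obtain ⟨hy3, hyE⟩ := hy
    obtain ⟨hx30, hx31⟩ := hx3
    obtain ⟨hy30, hy31⟩ := hy3
    have hd := hsep x hxE y hyE hxy
    have h0 : |x 0 - y 0| ≤ 3 * A.side := by
      have t := abs_sub_le (x 0) (A.x0 + A.side / 2) (y 0)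
      rw [abs_sub_comm (A.x0 + A.side / 2) (y 0)] at t
      linarith
    have h1 : |x 1 - y 1| ≤ 3 * A.side := by
      have t := abs_sub_le (x 1) (A.y0 + A.side / 2) (y 1)
      rw [abs_sub_comm (A.y0 + A.side / 2) (y 1)] at t
      linarith
    have hub : dist x y ≤ 2 * (3 * A.side) := dist_le_of_coords x y _ (by linarith) h0 h1
    have : Δ ≤ 12 * Q.side := by
      calc Δ ≤ dist x y := hd
        _ ≤ 2 * (3 * A.side) := hub
        _ = 12 * Q.side := by rw [hA]; ring
    linarith
end
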